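/- Let G be a connected finite simple undirected graph on vertex set {1,…,N} with N ≥ 2, adjacency matrix A and diagonal degree matrix D, and let p ∈ [0,1]. Then the matrix M := (p·I + (1−p)·A·D⁻¹)·(A + I)·(I + D)⁻¹ + I is invertible, and the unique row vector z ∈ ℝ^N satisfying z·M = 𝟏 is z = (1/2)·𝟏. -/

import Mathlib

open Matrix

section Aux

variable {N : ℕ}

/-- Column-dominance invertibility helper: if every entry of `M` is nonnegative,
each column sums to `2`, and each diagonal entry exceeds `1`, then `z ᵥ* M = 0 → z = 0`. -/
lemma aux_vecMul_zero (M : Matrix (Fin N) (Fin N) ℝ) (hne : Nonempty (Fin N))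
    (hnn : ∀ i j, 0 ≤ M i j) (hcol : ∀ j, ∑ i, M i j = 2)
    (hdiag : ∀ j, 1 < M j j) : ∀ z : Fin N → ℝ, z ᵥ* M = 0 → z = 0 := by
  intro z hz
  obtain ⟨i, -, hi⟩ := Finset.exists_max_image Finset.univ (fun j => |z j|) Finset.univ_nonempty
  have hi' : ∀ j, |z j| ≤ |z i| := fun j => hi j (Finset.mem_univ j)
  have hzi : z i = 0 := by
    by_contra hzi
    have hzpos : 0 < |z i| := abs_pos.mpr hzi
    have hsum : ∑ j, z j * M j i = 0 := by
      have := congrFun hz i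
      simpa [Matrix.vecMul, dotProduct] using this
    have hmain : z i * M i i = -∑ j ∈ Finset.univ.erase i, z j * M j i := by
      have h := Finset.add_sum_erase Finset.univ (fun j => z j * M j i) (Finset.mem_univ i)
      rw [hsum] at h
      linarith
    have h1 : |z i| * M i i ≤ |z i| * (2 - M i i) := by
      have habs : |z i * M i i| ≤ ∑ j ∈ Finset.univ.erase i, |z j * M j i| := by
        rw [hmain, abs_neg]
        exact Finset.abs_sum_le_sum_abs _ _
      have h2 : ∑ j ∈ Finset.univ.erase i, |z j * M j i|
          ≤ ∑ j ∈ Finset.univ.erase i, |z i| * M j i := by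
        refine Finset.sum_le_sum fun j _ => ?_
        rw [abs_mul, abs_of_nonneg (hnn j i)]
        exact mul_le_mul_of_nonneg_right (hi' j) (hnn j i)
      have h3 : ∑ j ∈ Finset.univ.erase i, |z i| * M j i = |z i| * (2 - M i i) := by
        rw [← Finset.mul_sum]
        congr 1
        have h := Finset.add_sum_erase Finset.univ (fun j => M j i) (Finset.mem_univ i)
        rw [hcol i] at h
        linarith
      calc |z i| * M i i = |z i * M i i| := by
            rw [abs_mul, abs_of_nonneg (hnn i i)]
        _ ≤ _ := habs
        _ ≤ _ := h2
        _ = _ := h3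
    have : M i i ≤ 2 - M i i := le_of_mul_le_mul_left (by linarith) hzpos
    linarith [hdiag i]
  funext j
  have := hi' j
  rw [hzi, abs_zero] at this
  simpa using abs_eq_zero.mp (le_antisymm this (abs_nonneg _))

end Aux

/-- For a connected graph on `N ≥ 2` vertices and `p ∈ [0,1]`, the matrix
`M = (p·I + (1−p)·A·D⁻¹)·(A + I)·(I + D)⁻¹ + I` is invertible, and the unique row vector `z`
with `z·M = 𝟏` is `z = (1/2)𝟏`. -/
theorem stmt_9 (N : ℕ) (hN : 2 ≤ N) (G : SimpleGraph (Fin N)) [DecidableRel G.Adj]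
    (hconn : G.Connected)
    (p : ℝ) (hp0 : 0 ≤ p) (hp1 : p ≤ 1) :
    IsUnit ((p • (1 : Matrix (Fin N) (Fin N) ℝ)
        + (1 - p) • (G.adjMatrix ℝ * (Matrix.diagonal fun v => (G.degree v : ℝ))⁻¹))
        * (G.adjMatrix ℝ + 1) * (1 + Matrix.diagonal fun v => (G.degree v : ℝ))⁻¹ + 1) ∧
    ∀ z : Fin N → ℝ,
      z ᵥ* ((p • (1 : Matrix (Fin N) (Fin N) ℝ)
          + (1 - p) • (G.adjMatrix ℝ * (Matrix.diagonal fun v => (G.degree v : ℝ))⁻¹))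
          * (G.adjMatrix ℝ + 1) * (1 + Matrix.diagonal fun v => (G.degree v : ℝ))⁻¹ + 1)
        = (fun _ => 1) ↔ z = fun _ => 1 / 2 := by
  have hNe : Nonempty (Fin N) := ⟨⟨0, by omega⟩⟩
  have hNt : Nontrivial (Fin N) := by
    refine ⟨⟨⟨0, by omega⟩, ⟨1, by omega⟩, ?_⟩⟩
    simp [Fin.ext_iff]
  -- every vertex has a neighbor
  have hadj : ∀ v : Fin N, ∃ w, G.Adj v w := by
    intro v
    obtain ⟨w, hw⟩ := exists_ne v
    obtain ⟨q⟩ := hconn.preconnected v w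
    have hq : ¬ q.Nil := SimpleGraph.Walk.not_nil_of_ne (Ne.symm hw)
    exact ⟨q.getVert 1, q.adj_snd hq⟩
  set d : Fin N → ℝ := fun v => (G.degree v : ℝ) with hd
  have hdpos : ∀ v, 0 < d v := by
    intro v
    have h : 0 < G.degree v := G.degree_pos_iff_exists_adj v |>.mpr (hadj v)
    show (0:ℝ) < (G.degree v : ℝ)
    exact_mod_cast h
  set A := G.adjMatrix ℝ with hAdef
  have hAnn : ∀ i j, 0 ≤ A i j := by
    intro i j; rw [hAdef]; simp only [SimpleGraph.adjMatrix_apply]; positivity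
  have hAcol : ∀ j, ∑ i, A i j = d j := by
    intro j
    rw [hAdef, hd]
    simp only [SimpleGraph.adjMatrix_apply]
    have h : ∀ i, (if G.Adj i j then (1:ℝ) else 0) = if G.Adj j i then 1 else 0 := by
      intro i
      by_cases h : G.Adj i j
      · simp [h, h.symm]
      · have h' : ¬ G.Adj j i := fun hh => h hh.symm
        simp [h, h']
    rw [Finset.sum_congr rfl (fun i _ => h i), Finset.sum_boole]
    norm_cast
    rw [← SimpleGraph.neighborFinset_eq_filter]
    exact SimpleGraph.card_neighborFinset_eq_degree G j
  -- inverses of the diagonal matrices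
  have hDinv : (Matrix.diagonal fun v => (G.degree v : ℝ))⁻¹
      = Matrix.diagonal (fun v => (d v)⁻¹) := by
    apply Matrix.inv_eq_right_inv
    rw [Matrix.diagonal_mul_diagonal]
    have h : (fun v => (G.degree v : ℝ) * (d v)⁻¹) = fun _ => (1 : ℝ) := by
      funext v; exact mul_inv_cancel₀ (hdpos v).ne'
    rw [h, Matrix.diagonal_one]
  have hEdiag : (1 : Matrix (Fin N) (Fin N) ℝ) + Matrix.diagonal (fun v => (G.degree v : ℝ))
      = Matrix.diagonal (fun v => 1 + d v) := by
    rw [← Matrix.diagonal_one, Matrix.diagonal_add]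
  have hEinv : ((1 : Matrix (Fin N) (Fin N) ℝ) + Matrix.diagonal fun v => (G.degree v : ℝ))⁻¹
      = Matrix.diagonal (fun v => (1 + d v)⁻¹) := by
    rw [hEdiag]
    apply Matrix.inv_eq_right_inv
    rw [Matrix.diagonal_mul_diagonal]
    have : (fun v => (1 + d v) * (1 + d v)⁻¹) = fun _ => (1 : ℝ) := by
      funext v; exact mul_inv_cancel₀ (by have := hdpos v; positivity)
    rw [this, Matrix.diagonal_one]
  set S : Matrix (Fin N) (Fin N) ℝ :=
    p • (1 : Matrix (Fin N) (Fin N) ℝ) + (1 - p) • (A * Matrix.diagonal (fun v => (d v)⁻¹))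
    with hSdef
  set C : Matrix (Fin N) (Fin N) ℝ := (A + 1) * Matrix.diagonal (fun v => (1 + d v)⁻¹) with hCdef
  set M : Matrix (Fin N) (Fin N) ℝ := S * C + 1 with hMdef
  have hMeq : (p • (1 : Matrix (Fin N) (Fin N) ℝ)
        + (1 - p) • (G.adjMatrix ℝ * (Matrix.diagonal fun v => (G.degree v : ℝ))⁻¹))
        * (G.adjMatrix ℝ + 1) * (1 + Matrix.diagonal fun v => (G.degree v : ℝ))⁻¹ + 1 = M := by
    rw [hMdef, hSdef, hCdef, hDinv, hEinv, hAdef, Matrix.mul_assoc]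
  -- entry formulas
  have hSentry : ∀ i k, S i k
      = p * (if i = k then 1 else 0) + (1 - p) * (A i k * (d k)⁻¹) := by
    intro i k
    rw [hSdef]
    simp [Matrix.add_apply, Matrix.smul_apply, Matrix.one_apply, Matrix.mul_diagonal,
      smul_eq_mul]
  have hCentry : ∀ k j, C k j = (A k j + if k = j then 1 else 0) * (1 + d j)⁻¹ := by
    intro k j
    rw [hCdef]
    simp [Matrix.mul_diagonal, Matrix.add_apply, Matrix.one_apply]
  have hSnn : ∀ i k, 0 ≤ S i k := by
    intro i k
    rw [hSentry]
    have h1 := hAnn i k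
    have h2 := (hdpos k).le
    have : (0:ℝ) ≤ (if i = k then (1:ℝ) else 0) := by positivity
    have h4 : (0:ℝ) ≤ A i k * (d k)⁻¹ := by positivity
    nlinarith
  have hCnn : ∀ k j, 0 ≤ C k j := by
    intro k j
    rw [hCentry]
    have h1 := hAnn k j
    have h2 := hdpos j
    have : (0:ℝ) ≤ (if k = j then (1:ℝ) else 0) := by positivity
    positivity
  have hMnn : ∀ i j, 0 ≤ M i j := by
    intro i j
    rw [hMdef]
    simp only [Matrix.add_apply, Matrix.one_apply, Matrix.mul_apply]
    have h1 : (0:ℝ) ≤ ∑ k, S i k * C k j :=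
      Finset.sum_nonneg fun k _ => mul_nonneg (hSnn i k) (hCnn k j)
    have : (0:ℝ) ≤ (if i = j then (1:ℝ) else 0) := by positivity
    linarith
  -- column sums of S are 1
  have hScol : ∀ k, ∑ i, S i k = 1 := by
    intro k
    simp only [hSentry]
    rw [Finset.sum_add_distrib, ← Finset.mul_sum, ← Finset.mul_sum]
    rw [Finset.sum_ite_eq' Finset.univ k (fun _ => (1:ℝ))]
    rw [← Finset.sum_mul, hAcol, mul_inv_cancel₀ (hdpos k).ne']
    simp
  have hCcol : ∀ j, ∑ k, C k j = 1 := by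
    intro j
    simp only [hCentry]
    rw [← Finset.sum_mul, Finset.sum_add_distrib, hAcol,
      Finset.sum_ite_eq' Finset.univ j (fun _ => (1:ℝ))]
    simp only [Finset.mem_univ, if_true]
    rw [add_comm (d j) 1]
    exact mul_inv_cancel₀ (by have := hdpos j; positivity)
  have hMcol : ∀ j, ∑ i, M i j = 2 := by
    intro j
    rw [hMdef]
    simp only [Matrix.add_apply, Matrix.one_apply, Matrix.mul_apply]
    rw [Finset.sum_add_distrib, Finset.sum_comm]
    have h1 : ∑ k, ∑ i, S i k * C k j = 1 := by
      have : ∀ k, ∑ i, S i k * C k j = C k j := by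
        intro k; rw [← Finset.sum_mul, hScol, one_mul]
      rw [Finset.sum_congr rfl fun k _ => this k, hCcol]
    rw [h1, Finset.sum_ite_eq' Finset.univ j (fun _ => (1:ℝ))]
    norm_num
  -- diagonal entries exceed 1
  have hMdiag : ∀ j, 1 < M j j := by
    intro j
    rw [hMdef]
    simp only [Matrix.add_apply, Matrix.mul_apply, Matrix.one_apply_eq]
    have hpos : 0 < ∑ k, S j k * C k j := by
      rcases eq_or_lt_of_le hp0 with hp | hp
      · -- p = 0 : use a neighbor
        obtain ⟨w, hw⟩ := hadj j
        refine Finset.sum_pos' (fun k _ => mul_nonneg (hSnn j k) (hCnn k j))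
          ⟨w, Finset.mem_univ w, ?_⟩
        have hAjw : A j w = 1 := by rw [hAdef]; simp [hw]
        have hAwj : A w j = 1 := by rw [hAdef]; simp [hw.symm]
        have hwj : w ≠ j := fun h => G.loopless.irrefl j (h ▸ hw)
        have hS : S j w = (1 - p) * (d w)⁻¹ := by
          rw [hSentry, if_neg (fun h => hwj h.symm), hAjw]; ring
        have hC : C w j = (1 + d j)⁻¹ := by
          rw [hCentry, if_neg hwj, hAwj]; ring
        rw [hS, hC]
        have h1 := hdpos w
        have h2 := hdpos j
        have h3 : (0:ℝ) < 1 - p := by rw [← hp]; norm_num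
        positivity
      · -- p > 0 : use the diagonal
        refine Finset.sum_pos' (fun k _ => mul_nonneg (hSnn j k) (hCnn k j))
          ⟨j, Finset.mem_univ j, ?_⟩
        have hAjj : A j j = 0 := by rw [hAdef]; simp
        have hS : S j j = p := by rw [hSentry, if_pos rfl, hAjj]; ring
        have hC : C j j = (1 + d j)⁻¹ := by rw [hCentry, if_pos rfl, hAjj]; ring
        rw [hS, hC]
        have h2 := hdpos j
        positivity
    linarith
  -- injectivity of vecMul
  have hker := aux_vecMul_zero M hNe hMnn hMcol hMdiag
  have hinj : Function.Injective fun z : Fin N → ℝ => z ᵥ* M := by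
    intro z1 z2 h
    have : (z1 - z2) ᵥ* M = 0 := by
      rw [Matrix.sub_vecMul]
      simp only at h
      rw [h, sub_self]
    have := hker _ this
    exact sub_eq_zero.mp this
  -- the half vector works
  have hhalf : (fun _ : Fin N => (1:ℝ)/2) ᵥ* M = fun _ => 1 := by
    funext j
    have : ((fun _ : Fin N => (1:ℝ)/2) ᵥ* M) j = ∑ i, (1/2 : ℝ) * M i j := by
      simp [Matrix.vecMul, dotProduct]
    rw [this, ← Finset.mul_sum, hMcol]
    norm_num
  rw [hMeq]
  refine ⟨Matrix.vecMul_injective_iff_isUnit.mp hinj, fun z => ⟨fun hz => ?_, fun hz => ?_⟩⟩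
  · exact hinj (hz.trans hhalf.symm)
  · rw [hz]; exact hhalf
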